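/- Let K : ℝ → ℝ be continuous and 1-periodic with K(0) > 0, and let λ < 0. Let Λ₀(λ) denote the smallest eigenvalue of the periodic Schrödinger operator −d²/dx² + λK(x)/K(0) on [0,1) (equivalently, the infimum over C¹ 1-periodic ψ with ∫₀¹ ψ² = 1 of ∫₀¹ (ψ')² + λ∫₀¹ (K(x)/K(0)) ψ(x)² dx, assuming K ≤ K(0) pointwise so that Λ₀(λ) ≥ λ). Then |λ − Λ₀(λ)| = o(|λ|) as λ → −∞; that is, Λ₀(λ)/λ → 1. -/

import Mathlib

open Real intervalIntegral Filter

noncomputable def groundStateEnergy (K : ℝ → ℝ) (lam : ℝ) : ℝ :=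
  sInf {E : ℝ | ∃ ψ : ℝ → ℝ, ContDiff ℝ 1 ψ ∧ (∀ x, ψ (x + 1) = ψ x) ∧
    (∫ x in (0:ℝ)..1, (ψ x) ^ 2) = 1 ∧
    E = (∫ x in (0:ℝ)..1, (deriv ψ x) ^ 2) +
      lam * ∫ x in (0:ℝ)..1, (K x / K 0) * (ψ x) ^ 2}

-- every member of the set is ≥ lam, when lam ≤ 0
lemma mem_ge (K : ℝ → ℝ) (hK : Continuous K) (h0 : 0 < K 0) (hle : ∀ x, K x ≤ K 0)
    (lam : ℝ) (hlam : lam ≤ 0) (E : ℝ)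
    (hE : E ∈ {E : ℝ | ∃ ψ : ℝ → ℝ, ContDiff ℝ 1 ψ ∧ (∀ x, ψ (x + 1) = ψ x) ∧
      (∫ x in (0:ℝ)..1, (ψ x) ^ 2) = 1 ∧
      E = (∫ x in (0:ℝ)..1, (deriv ψ x) ^ 2) +
        lam * ∫ x in (0:ℝ)..1, (K x / K 0) * (ψ x) ^ 2}) : lam ≤ E := by
  obtain ⟨ψ, hψ, -, hnorm, hEeq⟩ := hE
  have hψc : Continuous ψ := hψ.continuous
  have hD : 0 ≤ ∫ x in (0:ℝ)..1, (deriv ψ x) ^ 2 :=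
    intervalIntegral.integral_nonneg (by norm_num) (fun x _ => sq_nonneg _)
  have hJ : (∫ x in (0:ℝ)..1, (K x / K 0) * (ψ x) ^ 2) ≤ 1 := by
    have h : (∫ x in (0:ℝ)..1, (K x / K 0) * (ψ x) ^ 2) ≤ ∫ x in (0:ℝ)..1, (ψ x) ^ 2 := by
      apply intervalIntegral.integral_mono_on (by norm_num)
      · exact ((hK.div_const _).mul (hψc.pow 2)).intervalIntegrable _ _
      · exact (hψc.pow 2).intervalIntegrable _ _
      · intro x _
        exact mul_le_of_le_one_left (sq_nonneg _) ((div_le_one h0).2 (hle x))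
    rwa [hnorm] at h
  have : lam * ∫ x in (0:ℝ)..1, (K x / K 0) * (ψ x) ^ 2 ≥ lam * 1 :=
    mul_le_mul_of_nonpos_left hJ hlam
  rw [hEeq]; nlinarith

lemma cos_mid (δ x : ℝ) (hδ : 0 < δ) (hδ2 : δ ≤ 1/2) (hx1 : δ ≤ x) (hx2 : x ≤ 1 - δ) :
    Real.cos (2*π*x) ≤ Real.cos (2*π*δ) := by
  have hπ := Real.pi_pos
  rcases le_or_gt x (1/2) with h | h
  · exact Real.cos_le_cos_of_nonneg_of_le_pi (by positivity) (by nlinarith) (by nlinarith)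
  · have : Real.cos (2*π*x) = Real.cos (2*π*(1-x)) := by
      rw [show 2*π*(1-x) = 2*π - 2*π*x by ring, Real.cos_two_pi_sub]
    rw [this]
    exact Real.cos_le_cos_of_nonneg_of_le_pi (by positivity) (by nlinarith) (by nlinarith)

-- the key test function construction
set_option maxHeartbeats 1000000 in
lemma exists_test (K : ℝ → ℝ) (hK : Continuous K) (hper : ∀ x, K (x + 1) = K x)
    (h0 : 0 < K 0) (ε : ℝ) (hε : 0 < ε) (hε1 : ε ≤ 1) :
    ∃ ψ : ℝ → ℝ, ContDiff ℝ 1 ψ ∧ (∀ x, ψ (x + 1) = ψ x) ∧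
      (∫ x in (0:ℝ)..1, (ψ x) ^ 2) = 1 ∧
      1 - ε ≤ ∫ x in (0:ℝ)..1, (K x / K 0) * (ψ x) ^ 2 := by
  have hπ := Real.pi_pos
  -- continuity at 0
  obtain ⟨δ0, hδ0, hKδ⟩ := Metric.continuousAt_iff.1 hK.continuousAt (ε * K 0 / 2) (by positivity)
  set δ : ℝ := min (δ0/2) (1/4) with hδdef
  have hδpos : 0 < δ := lt_min (by linarith) (by norm_num)
  have hδ4 : δ ≤ 1/4 := min_le_right _ _
  have hδδ0 : δ < δ0 := lt_of_le_of_lt (min_le_left _ _) (by linarith)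
  set η : ℝ := δ/2 with hηdef
  have hηpos : 0 < η := by positivity
  -- K close to K 0 near 0
  have hKnear : ∀ x : ℝ, |x| ≤ δ → 1 - ε/2 ≤ K x / K 0 := by
    intro x hx
    have := hKδ (show dist x 0 < δ0 by rw [Real.dist_eq, sub_zero]; linarith)
    rw [Real.dist_eq] at this
    rw [le_div_iff₀ h0]
    have := abs_lt.1 this
    nlinarith
  -- bound for K
  obtain ⟨C, hC⟩ := (isCompact_Icc (a := (0:ℝ)) (b := 1)).exists_bound_of_continuousOn
    hK.continuousOn
  have hC0 : 0 ≤ C := le_trans (norm_nonneg _) (hC 0 (by norm_num))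
  set a : ℝ := 1 + Real.cos (2*π*δ) with hadef
  set b : ℝ := 1 + Real.cos (2*π*η) with hbdef
  have ha0 : 0 ≤ a := by have := Real.neg_one_le_cos (2*π*δ); linarith
  have hab : a < b := by
    have : Real.cos (2*π*δ) < Real.cos (2*π*η) :=
      Real.cos_lt_cos_of_nonneg_of_le_pi (by positivity) (by nlinarith) (by nlinarith)
    simp only [hadef, hbdef]; linarith
  have hb0 : 0 < b := lt_of_le_of_lt ha0 hab
  set r : ℝ := (a/b)^2 with hrdef
  have hr0 : 0 ≤ r := sq_nonneg _
  have hr1 : r < 1 := by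
    rw [hrdef, sq_lt_one_iff_abs_lt_one, abs_of_nonneg (div_nonneg ha0 hb0.le)]
    rw [div_lt_one hb0]; exact hab
  -- choose m
  have hten : Tendsto (fun m : ℕ => r ^ m) atTop (nhds 0) :=
    tendsto_pow_atTop_nhds_zero_of_lt_one hr0 hr1
  have htarget : (0:ℝ) < ε/2 * η / (1 + C / K 0) := by positivity
  obtain ⟨m, hm⟩ := ((hten.eventually (gt_mem_nhds htarget)).exists)
  -- the test function
  set g : ℝ → ℝ := fun x => 1 + Real.cos (2*π*x) with hgdef
  set f : ℝ → ℝ := fun x => (g x) ^ m with hfdef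
  have hgc : Continuous g := continuous_const.add (Real.continuous_cos.comp (continuous_const.mul continuous_id))
  have hfc : Continuous f := hgc.pow m
  have hg0 : ∀ x, 0 ≤ g x := fun x => by
    have := Real.neg_one_le_cos (2*π*x); simp only [hgdef]; linarith
  -- pointwise bounds
  have hfmid : ∀ x ∈ Set.Icc δ (1-δ), (f x)^2 ≤ (a^m)^2 := by
    intro x hx
    have h1 : g x ≤ a := by
      simp only [hgdef, hadef]
      have := cos_mid δ x hδpos (by linarith) hx.1 hx.2
      linarith
    have h2 : f x ≤ a^m := pow_le_pow_left₀ (hg0 x) h1 m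
    have h3 : 0 ≤ f x := pow_nonneg (hg0 x) m
    nlinarith
  have hfnear : ∀ x ∈ Set.Icc (0:ℝ) η, (b^m)^2 ≤ (f x)^2 := by
    intro x hx
    have h1 : b ≤ g x := by
      simp only [hgdef, hbdef]
      have : Real.cos (2*π*η) ≤ Real.cos (2*π*x) :=
        Real.cos_le_cos_of_nonneg_of_le_pi (by nlinarith [hx.1])
          (by nlinarith [hx.2]) (by nlinarith [hx.2])
      linarith
    have h2 : b^m ≤ f x := pow_le_pow_left₀ (le_of_lt hb0) h1 m
    have h3 : 0 ≤ b^m := pow_nonneg (le_of_lt hb0) m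
    nlinarith
  -- integrals
  set I : ℝ := ∫ x in (0:ℝ)..1, (f x)^2 with hIdef
  set N₁ : ℝ := ∫ x in (0:ℝ)..δ, (f x)^2 with hN1def
  set M : ℝ := ∫ x in δ..(1-δ), (f x)^2 with hMdef
  set N₃ : ℝ := ∫ x in (1-δ)..1, (f x)^2 with hN3def
  have hint : ∀ u v : ℝ, IntervalIntegrable (fun x => (f x)^2) MeasureTheory.volume u v :=
    fun u v => (hfc.pow 2).intervalIntegrable u v
  have hintK : ∀ u v : ℝ, IntervalIntegrable (fun x => (K x / K 0) * (f x)^2)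
      MeasureTheory.volume u v :=
    fun u v => ((hK.div_const _).mul (hfc.pow 2)).intervalIntegrable u v
  have hsplitI : N₁ + M + N₃ = I := by
    rw [hN1def, hMdef, hN3def, hIdef,
      intervalIntegral.integral_add_adjacent_intervals (hint 0 δ) (hint δ (1-δ)),
      intervalIntegral.integral_add_adjacent_intervals (hint 0 (1-δ)) (hint (1-δ) 1)]
  -- lower bound on I
  have hIlow : η * (b^m)^2 ≤ I := by
    have h1 : ∫ x in (0:ℝ)..η, (b^m)^2 ≤ ∫ x in (0:ℝ)..η, (f x)^2 := by
      apply intervalIntegral.integral_mono_on (le_of_lt hηpos)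
        (intervalIntegrable_const) (hint 0 η)
      exact fun x hx => hfnear x hx
    rw [intervalIntegral.integral_const, smul_eq_mul, sub_zero] at h1
    have h2 : (∫ x in (0:ℝ)..η, (f x)^2) + ∫ x in η..1, (f x)^2 = I := by
      rw [hIdef, intervalIntegral.integral_add_adjacent_intervals (hint 0 η) (hint η 1)]
    have h3 : 0 ≤ ∫ x in η..1, (f x)^2 :=
      intervalIntegral.integral_nonneg (by linarith) (fun x _ => sq_nonneg _)
    linarith
  have hIpos : 0 < I := lt_of_lt_of_le (mul_pos hηpos (pow_pos (pow_pos hb0 m) 2)) hIlow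
  -- bounds on pieces
  have hN1nn : 0 ≤ N₁ :=
    intervalIntegral.integral_nonneg (le_of_lt hδpos) (fun x _ => sq_nonneg _)
  have hN3nn : 0 ≤ N₃ :=
    intervalIntegral.integral_nonneg (by linarith) (fun x _ => sq_nonneg _)
  have hMnn : 0 ≤ M :=
    intervalIntegral.integral_nonneg (by linarith) (fun x _ => sq_nonneg _)
  have hMup : M ≤ (a^m)^2 := by
    have h1 : M ≤ ∫ _x in δ..(1-δ), (a^m)^2 := by
      apply intervalIntegral.integral_mono_on (by linarith) (hint δ (1-δ))
        intervalIntegrable_const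
      exact fun x hx => hfmid x hx
    rw [intervalIntegral.integral_const, smul_eq_mul] at h1
    nlinarith [sq_nonneg (a^m)]
  -- bound on P pieces
  set P : ℝ := ∫ x in (0:ℝ)..1, (K x / K 0) * (f x)^2 with hPdef
  set P₁ : ℝ := ∫ x in (0:ℝ)..δ, (K x / K 0) * (f x)^2 with hP1def
  set P₂ : ℝ := ∫ x in δ..(1-δ), (K x / K 0) * (f x)^2 with hP2def
  set P₃ : ℝ := ∫ x in (1-δ)..1, (K x / K 0) * (f x)^2 with hP3def
  have hsplitP : P₁ + P₂ + P₃ = P := by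
    rw [hP1def, hP2def, hP3def, hPdef,
      intervalIntegral.integral_add_adjacent_intervals (hintK 0 δ) (hintK δ (1-δ)),
      intervalIntegral.integral_add_adjacent_intervals (hintK 0 (1-δ)) (hintK (1-δ) 1)]
  have hP1 : (1 - ε/2) * N₁ ≤ P₁ := by
    rw [hN1def, ← intervalIntegral.integral_const_mul]
    apply intervalIntegral.integral_mono_on (le_of_lt hδpos)
      ((continuous_const.mul (hfc.pow 2)).intervalIntegrable _ _) (hintK 0 δ)
    intro x hx
    have h1 : 1 - ε/2 ≤ K x / K 0 := hKnear x (by rw [abs_of_nonneg hx.1]; exact hx.2)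
    exact mul_le_mul_of_nonneg_right h1 (sq_nonneg _)
  have hP3 : (1 - ε/2) * N₃ ≤ P₃ := by
    rw [hN3def, ← intervalIntegral.integral_const_mul]
    apply intervalIntegral.integral_mono_on (by linarith)
      ((continuous_const.mul (hfc.pow 2)).intervalIntegrable _ _) (hintK (1-δ) 1)
    intro x hx
    have hxper : K x = K (x - 1) := by have h := hper (x-1); rwa [sub_add_cancel] at h
    have h1 : 1 - ε/2 ≤ K x / K 0 := by
      rw [hxper]
      exact hKnear (x-1) (by rw [abs_le]; constructor <;> [linarith [hx.1]; linarith [hx.2]])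
    exact mul_le_mul_of_nonneg_right h1 (sq_nonneg _)
  have hP2 : -(C / K 0) * M ≤ P₂ := by
    rw [hMdef, ← intervalIntegral.integral_const_mul]
    apply intervalIntegral.integral_mono_on (by linarith)
      ((continuous_const.mul (hfc.pow 2)).intervalIntegrable _ _) (hintK δ (1-δ))
    intro x hx
    have hxI : x ∈ Set.Icc (0:ℝ) 1 := ⟨by linarith [hx.1], by linarith [hx.2]⟩
    have h1 : -C ≤ K x := by
      have := hC x hxI; rw [Real.norm_eq_abs, abs_le] at this; linarith [this.1]
    have h2 : -(C / K 0) ≤ K x / K 0 := by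
      rw [← neg_div]; exact (div_le_div_iff_of_pos_right h0).2 h1
    exact mul_le_mul_of_nonneg_right h2 (sq_nonneg _)
  -- combine
  have hs0 : (0:ℝ) ≤ C / K 0 := div_nonneg hC0 h0.le
  have hs1 : (0:ℝ) < 1 + C / K 0 := by linarith
  have h2 : r^m * (b^m)^2 = (a^m)^2 := by
    have e1 : (b^m)^2 = (b^2)^m := by rw [← pow_mul, ← pow_mul, mul_comm]
    have e2 : (a^m)^2 = (a^2)^m := by rw [← pow_mul, ← pow_mul, mul_comm]
    have e3 : r * b^2 = a^2 := by
      rw [hrdef, div_pow, div_mul_cancel₀]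
      exact pow_ne_zero _ hb0.ne'
    rw [e1, e2, ← mul_pow, e3]
  have hmM : (1 + C / K 0) * M ≤ ε/2 * I := by
    calc (1 + C / K 0) * M ≤ (1 + C / K 0) * (a^m)^2 :=
          mul_le_mul_of_nonneg_left hMup hs1.le
      _ = (1 + C / K 0) * (r^m * (b^m)^2) := by rw [h2]
      _ ≤ (1 + C / K 0) * ((ε/2 * η / (1 + C / K 0)) * (b^m)^2) := by
          apply mul_le_mul_of_nonneg_left
            (mul_le_mul_of_nonneg_right hm.le (sq_nonneg _)) hs1.le
      _ = ε/2 * (η * (b^m)^2) := by field_simp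
      _ ≤ ε/2 * I := mul_le_mul_of_nonneg_left hIlow (by linarith)
  have hεI : ε * I = ε * N₁ + ε * M + ε * N₃ := by rw [← hsplitI]; ring
  have hPlow : (1 - ε) * I ≤ P := by
    have hεM : 0 ≤ ε * M := mul_nonneg hε.le hMnn
    linarith [hmM, hεI, hsplitI, hsplitP, hP1, hP2, hP3, hεM]
  -- normalize
  set c : ℝ := Real.sqrt I with hcdef
  have hc : 0 < c := Real.sqrt_pos.2 hIpos
  have hc2 : c^2 = I := Real.sq_sqrt hIpos.le
  refine ⟨fun x => f x / c, ?_, ?_, ?_, ?_⟩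
  · simp only [hfdef, hgdef]
    exact ((contDiff_const.add (Real.contDiff_cos.comp
      (contDiff_const.mul contDiff_id))).pow m).div_const c |>.of_le le_top
  · intro x
    have : g (x+1) = g x := by
      simp only [hgdef]
      rw [show 2*π*(x+1) = 2*π*x + 2*π by ring, Real.cos_add_two_pi]
    simp only [hfdef, this]
  · have : ∀ x : ℝ, (f x / c)^2 = (f x)^2 / c^2 := fun x => div_pow _ _ _
    simp_rw [this, intervalIntegral.integral_div, hc2, ← hIdef, div_self hIpos.ne']
  · have : ∀ x : ℝ, K x / K 0 * (f x / c)^2 = (K x / K 0 * (f x)^2) / c^2 := fun x => by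
      rw [div_pow]; ring
    simp_rw [this, intervalIntegral.integral_div, hc2, ← hPdef]
    rw [le_div_iff₀ hIpos]
    linarith [hPlow]

theorem ground_state_asymptotics (K : ℝ → ℝ) (hK : Continuous K)
    (hper : ∀ x, K (x + 1) = K x) (h0 : 0 < K 0) (hle : ∀ x, K x ≤ K 0) :
    Filter.Tendsto (fun lam => groundStateEnergy K lam / lam)
      Filter.atBot (nhds 1) := by
  rw [Metric.tendsto_nhds]
  intro ε hε
  set ε₀ : ℝ := min ε 1 with hε₀def
  have hε₀ : 0 < ε₀ := lt_min hε one_pos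
  have hε₀1 : ε₀ ≤ 1 := min_le_right _ _
  have hε₀ε : ε₀ ≤ ε := min_le_left _ _
  obtain ⟨ψ, hψ, hψper, hψnorm, hψJ⟩ :=
    exists_test K hK hper h0 (ε₀/3) (by positivity) (by linarith)
  have hψc : Continuous ψ := hψ.continuous
  set D : ℝ := ∫ x in (0:ℝ)..1, (deriv ψ x)^2 with hDdef
  have hD0 : 0 ≤ D :=
    intervalIntegral.integral_nonneg (by norm_num) fun x _ => sq_nonneg _
  set J : ℝ := ∫ x in (0:ℝ)..1, (K x / K 0) * (ψ x)^2 with hJdef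
  have hJ1 : J ≤ 1 := by
    have h : J ≤ ∫ x in (0:ℝ)..1, (ψ x) ^ 2 := by
      apply intervalIntegral.integral_mono_on (by norm_num)
      · exact ((hK.div_const _).mul (hψc.pow 2)).intervalIntegrable _ _
      · exact (hψc.pow 2).intervalIntegrable _ _
      · intro x _
        exact mul_le_of_le_one_left (sq_nonneg _) ((div_le_one h0).2 (hle x))
    rwa [hψnorm] at h
  rw [Filter.eventually_atBot]
  refine ⟨min (-1) (-(3*D/ε₀ + 1)), fun lam hlam => ?_⟩
  have hlam1 : lam ≤ -1 := le_trans hlam (min_le_left _ _)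
  have hlam2 : lam ≤ -(3*D/ε₀ + 1) := le_trans hlam (min_le_right _ _)
  have hlamneg : lam < 0 := by linarith
  have hmem : D + lam * J ∈ {E : ℝ | ∃ ψ : ℝ → ℝ, ContDiff ℝ 1 ψ ∧
      (∀ x, ψ (x + 1) = ψ x) ∧ (∫ x in (0:ℝ)..1, (ψ x) ^ 2) = 1 ∧
      E = (∫ x in (0:ℝ)..1, (deriv ψ x) ^ 2) +
        lam * ∫ x in (0:ℝ)..1, (K x / K 0) * (ψ x) ^ 2} :=
    ⟨ψ, hψ, hψper, hψnorm, rfl⟩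
  have hlow : lam ≤ groundStateEnergy K lam := by
    rw [groundStateEnergy]
    exact le_csInf ⟨_, hmem⟩ (fun E hE => mem_ge K hK h0 hle lam hlamneg.le E hE)
  have hup : groundStateEnergy K lam ≤ D + lam * J := by
    rw [groundStateEnergy]
    exact csInf_le ⟨lam, fun E hE => mem_ge K hK h0 hle lam hlamneg.le E hE⟩ hmem
  have h1 : groundStateEnergy K lam / lam ≤ 1 := by
    rw [div_le_iff_of_neg hlamneg]; linarith
  have hDl : -(ε₀/3) ≤ D / lam := by
    have hpos : (0:ℝ) < 3*D/ε₀ + 1 := by positivity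
    have hml : 3*D/ε₀ + 1 ≤ -lam := by linarith
    have ha : D / (-lam) ≤ D / (3*D/ε₀ + 1) :=
      div_le_div_of_nonneg_left hD0 hpos hml
    have hb : D / (3*D/ε₀ + 1) ≤ ε₀/3 := by
      rw [div_le_iff₀ hpos]
      have : ε₀/3 * (3*D/ε₀ + 1) = D + ε₀/3 := by field_simp
      linarith
    have : D / lam = -(D / (-lam)) := by rw [div_neg, neg_neg]
    linarith
  have h2 : 1 - 2*ε₀/3 ≤ groundStateEnergy K lam / lam := by
    have ha : (D + lam * J) / lam ≤ groundStateEnergy K lam / lam :=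
      (div_le_div_right_of_neg hlamneg).2 hup
    have hb : (D + lam * J) / lam = D / lam + J := by
      rw [add_div, mul_div_cancel_left₀ _ hlamneg.ne]
    have hc : 1 - ε₀/3 ≤ J := hψJ
    rw [hb] at ha
    linarith
  rw [Real.dist_eq, abs_lt]
  constructor <;> [linarith [hε₀, hε₀ε]; linarith [hε₀, hε₀ε]]
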